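/- Let V be a finite vertex set, H a simple graph on V, and for each i ∈ V let S i be a nonempty finite type. Suppose f : (∀ i, S i) → ℝ≥0 factorizes according to H, i.e., f = ∏_{c ∈ C} φ_c where each c ∈ C is a clique of H and each φ_c is a nonnegative function of the coordinates in c. Then for every pair of distinct non-adjacent vertices p, q of H, the pairwise conditional-independence identity holds: for every configuration x ∈ ∏ i, S i and all values a, a' ∈ S p and b, b' ∈ S q, f(x[p:=a][q:=b]) · f(x[p:=a'][q:=b']) = f(x[p:=a][q:=b']) · f(x[p:=a'][q:=b]). (This is the pairwise Markov property of factorizing distributions, used in the proof of Theorem 4.) -/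
import Mathlib


open scoped NNReal

/-- pairwise Markov property of factorizing distributions: if
`f = ∏_c φ_c` with each `c` a clique of `H` and each `φ_c` depending only on the
coordinates in `c`, then for every pair of distinct non-adjacent vertices `p, q`,
the pairwise conditional-independence identity holds. -/
theorem stmt11 {V : Type*} [Fintype V] [DecidableEq V] (H : SimpleGraph V)
    (S : V → Type*) [∀ i, Fintype (S i)] [∀ i, Nonempty (S i)]
    (m : ℕ) (c : Fin m → Set V) (hc : ∀ k, H.IsClique (c k))
    (φ : Fin m → (∀ i, S i) → ℝ≥0)
    (hφ : ∀ k (x x' : ∀ i, S i), (∀ v ∈ c k, x v = x' v) → φ k x = φ k x')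
    (f : (∀ i, S i) → ℝ≥0) (hf : ∀ x, f x = ∏ k, φ k x)
    (p q : V) (hpq : p ≠ q) (hnadj : ¬ H.Adj p q) :
    ∀ (x : ∀ i, S i) (a a' : S p) (b b' : S q),
      f (Function.update (Function.update x p a) q b) *
        f (Function.update (Function.update x p a') q b') =
      f (Function.update (Function.update x p a) q b') *
        f (Function.update (Function.update x p a') q b) := by
  intro x a a' b b'
  simp only [hf, ← Finset.prod_mul_distrib]
  apply Finset.prod_congr rfl
  intro k _
  have hnot : ¬ (p ∈ c k ∧ q ∈ c k) := by
    rintro ⟨hp, hq⟩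
    exact hnadj (hc k hp hq hpq)
  by_cases hp : p ∈ c k
  · have hq : q ∉ c k := fun hq => hnot ⟨hp, hq⟩
    have h1 : φ k (Function.update (Function.update x p a) q b)
        = φ k (Function.update (Function.update x p a) q b') := by
      apply hφ
      intro v hv
      have : v ≠ q := fun h => hq (h ▸ hv)
      simp [Function.update_of_ne this]
    have h2 : φ k (Function.update (Function.update x p a') q b')
        = φ k (Function.update (Function.update x p a') q b) := by
      apply hφ
      intro v hv
      have : v ≠ q := fun h => hq (h ▸ hv)
      simp [Function.update_of_ne this]
    rw [h1, h2, mul_comm]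
  · have h1 : φ k (Function.update (Function.update x p a) q b)
        = φ k (Function.update (Function.update x p a') q b) := by
      apply hφ
      intro v hv
      have hvp : v ≠ p := fun h => hp (h ▸ hv)
      by_cases hvq : v = q
      · subst hvq; simp
      · simp [Function.update_of_ne hvq, Function.update_of_ne hvp]
    have h2 : φ k (Function.update (Function.update x p a') q b')
        = φ k (Function.update (Function.update x p a) q b') := by
      apply hφ
      intro v hv
      have hvp : v ≠ p := fun h => hp (h ▸ hv)
      by_cases hvq : v = q
      · subst hvq; simp
      · simp [Function.update_of_ne hvq, Function.update_of_ne hvp]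
    rw [h1, h2, mul_comm]
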